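/- Let G be a parity game, and suppose a lifting sequence is applied in which a vertex v is the first vertex whose measure value becomes ⊤. Then the priority P(v) of v is odd. -/

import Mathlib

open Classical

noncomputable section

instance (priority := 5000) (n : ℕ) : WellFoundedLT (Fin n) :=
  Finite.to_wellFoundedLT

noncomputable instance (priority := 5000) (n : ℕ) : LinearOrder (Lex (Fin n → ℕ)) :=
  inferInstance

/-- Least element of a set, if it exists; otherwise a default value. -/
def sLeast {α : Type*} [Preorder α] (s : Set α) (dflt : α) : α :=
  if h : ∃ a, IsLeast s a then h.choose else dflt

/-- Greatest element of a set, if it exists; otherwise a default value. -/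
def sGreatest {α : Type*} [Preorder α] (s : Set α) (dflt : α) : α :=
  if h : ∃ a, IsGreatest s a then h.choose else dflt

/-- A parity game: a finite set of vertices with a total edge relation, a priority
function and an ownership function (`ownerEven v = true` iff `v ∈ V_Even`). -/
structure ParityGame (V : Type*) [Fintype V] where
  E : V → V → Prop
  total : ∀ v, ∃ w, E v w
  prio : V → ℕ
  ownerEven : V → Bool

namespace ParityGame

variable {V : Type*} [Fintype V] [DecidableEq V] (G : ParityGame V)

/-- `d` is one plus the maximal priority occurring in the game. -/
def d : ℕ := (Finset.univ.sup G.prio) + 1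

/-- The domain of (extended) measures: `⊤` together with `d`-tuples of naturals,
ordered lexicographically with `⊤` maximal.  This is `M_Even_ext` (together with
tuples that are nonzero at even positions, which are never used). -/
abbrev Meas : Type _ := WithTop (Lex (Fin G.d → ℕ))

/-- `nP i` is the number of vertices of priority `i`. -/
def nP (i : ℕ) : ℕ := (Finset.univ.filter (fun v => G.prio v = i)).card

/-- Membership in `M_Even`: `⊤`, or a `d`-tuple which is `0` at even positions and
bounded by `nP i` at odd positions `i`. -/
def inMEven (m : G.Meas) : Prop :=
  m = ⊤ ∨ ∃ f : Fin G.d → ℕ, m = ((toLex f : Lex (Fin G.d → ℕ)) : G.Meas) ∧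
    ∀ i : Fin G.d, (Even (i : ℕ) → f i = 0) ∧ (¬ Even (i : ℕ) → f i ≤ G.nP (i : ℕ))

/-- Membership in `M_Even_ext`: `⊤`, or a `d`-tuple which is `0` at even positions. -/
def inMEvenExt (m : G.Meas) : Prop :=
  m = ⊤ ∨ ∃ f : Fin G.d → ℕ, m = ((toLex f : Lex (Fin G.d → ℕ)) : G.Meas) ∧
    ∀ i : Fin G.d, Even (i : ℕ) → f i = 0

/-- Truncation of a measure to components `0, …, k` (other components set to `0`);
`⊤` is mapped to `⊤`. -/
def trunc (k : ℕ) (m : G.Meas) : G.Meas :=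
  WithTop.map (fun f : Lex (Fin G.d → ℕ) => toLex (fun j : Fin G.d => if (j : ℕ) ≤ k then ofLex f j else 0)) m

/-- `a ≥_k b` : comparison of measures on components `0, …, k` only. -/
def geAt (k : ℕ) (a b : G.Meas) : Prop := G.trunc k b ≤ G.trunc k a

/-- `a >_k b` : strict comparison of measures on components `0, …, k` only. -/
def gtAt (k : ℕ) (a b : G.Meas) : Prop := G.trunc k b < G.trunc k a

/-- The defining condition of `Prog(ρ,v,w)`. -/
def progCond (ρ : V → G.Meas) (v w : V) (m : G.Meas) : Prop :=
  if Even (G.prio v) then G.geAt (G.prio v) m (ρ w)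
  else (G.gtAt (G.prio v) m (ρ w) ∨ (m = ⊤ ∧ ρ w = ⊤))

/-- `Prog(ρ,v,w)`: the least element of `M_Even` satisfying `progCond`. -/
def Prog (ρ : V → G.Meas) (v w : V) : G.Meas :=
  if h : ∃ m, IsLeast {m | G.inMEven m ∧ G.progCond ρ v w m} m then h.choose else ⊤

/-- `ρ` takes values in `M_Even`. -/
def IsMeasure (ρ : V → G.Meas) : Prop := ∀ v, G.inMEven (ρ v)

/-- Game parity progress measure. -/
def IsGPM (ρ : V → G.Meas) : Prop :=
  G.IsMeasure ρ ∧ ∀ v,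
    (G.ownerEven v = true → ∃ w, G.E v w ∧ G.geAt (G.prio v) (ρ v) (G.Prog ρ v w)) ∧
    (G.ownerEven v = false → ∀ w, G.E v w → G.geAt (G.prio v) (ρ v) (G.Prog ρ v w))

/-- A play: an infinite `E`-path. -/
def IsPlay (π : ℕ → V) : Prop := ∀ n, G.E (π n) (π (n + 1))

/-- Priority `p` occurs infinitely often on `π`. -/
def InfOft (π : ℕ → V) (p : ℕ) : Prop := ∀ N, ∃ n, N ≤ n ∧ G.prio (π n) = p

/-- A play is won by Even iff the least priority occurring infinitely often is even. -/
def WonByEven (π : ℕ → V) : Prop := Even (sInf {p | G.InfOft π p})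

/-- Won by player `i` (`true` = Even, `false` = Odd). -/
def WonBy (i : Bool) (π : ℕ → V) : Prop :=
  if i then G.WonByEven π else ¬ G.WonByEven π

/-- The history of a play before time `n`. -/
def hist (π : ℕ → V) (n : ℕ) : List V := List.ofFn (fun k : Fin n => π (k : ℕ))

/-- A (history-dependent) strategy for player `i` is valid if it always moves along edges
from vertices of player `i`. -/
def ValidStrat (i : Bool) (σ : List V → V → V) : Prop :=
  ∀ h v, G.ownerEven v = i → G.E v (σ h v)

/-- Consistency of a play with a history-dependent strategy of player `i`. -/
def ConsH (i : Bool) (σ : List V → V → V) (π : ℕ → V) : Prop :=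
  ∀ n, G.ownerEven (π n) = i → π (n + 1) = σ (hist π n) (π n)

/-- Consistency of a play with a positional strategy of player `i`. -/
def ConsP (i : Bool) (σ : V → V) (π : ℕ → V) : Prop :=
  ∀ n, G.ownerEven (π n) = i → π (n + 1) = σ (π n)

/-- Winning region of player `i`: vertices from which `i` has a winning strategy. -/
def WinRegion (i : Bool) : Set V :=
  {v | ∃ σ : List V → V → V, G.ValidStrat i σ ∧
    ∀ π, G.IsPlay π → π 0 = v → G.ConsH i σ π → G.WonBy i π}

/-- The `i`-attractor into `U`. -/
def Attr (i : Bool) (U : Set V) : Set V :=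
  ⋂₀ {A | U ⊆ A ∧
    (∀ v, G.ownerEven v = i → (∃ w, G.E v w ∧ w ∈ A) → v ∈ A) ∧
    (∀ v, G.ownerEven v ≠ i → (∀ w, G.E v w → w ∈ A) → v ∈ A)}

/-- The guarded attractor `Attr^{≥k}_{Odd,W}(U)`. -/
def GAttr (k : ℕ) (W U : Set V) : Set V :=
  ⋂₀ {A | U ⊆ A ∧ A ⊆ W ∩ {v | k ≤ G.prio v} ∧
    ∀ u ∈ W ∩ {v | k ≤ G.prio v},
      (G.ownerEven u = false → (∃ w, G.E u w ∧ w ∈ A) → u ∈ A) ∧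
      (G.ownerEven u = true → (∀ w, G.E u w → w ∈ W → w ∈ A) → u ∈ A)}

/-- The lifting operator `Lift(ρ, v)`. -/
def Lift (ρ : V → G.Meas) (v : V) : V → G.Meas :=
  Function.update ρ v
    (if G.ownerEven v = true
      then max (ρ v) (sLeast {m | ∃ w, G.E v w ∧ m = G.Prog ρ v w} ⊤)
      else max (ρ v) (sGreatest {m | ∃ w, G.E v w ∧ m = G.Prog ρ v w} ⊤))

/-- The all-zero measure. -/
def zeroMeas : G.Meas := ((toLex (fun _ : Fin G.d => 0) : Lex (Fin G.d → ℕ)) : G.Meas)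

/-- A lifting sequence `ρ₀, …, ρ_N` in which `v` is the first vertex lifted to `⊤`. -/
def FirstTop (ρs : ℕ → V → G.Meas) (N : ℕ) (v : V) : Prop :=
  (∀ u, ρs 0 u = G.zeroMeas) ∧
  (∀ j < N, ∃ u, ρs (j + 1) = G.Lift (ρs j) u ∧
    (∀ w, ρs j w ≤ ρs (j + 1) w) ∧ ρs j ≠ ρs (j + 1)) ∧
  (∀ j < N, ∀ w, ρs j w ≠ ⊤) ∧
  ρs N v = ⊤

/-- The prefix `π 0 … π l` of a play is an `i`-dominated stretch. -/
def domStretchPrefix (π : ℕ → V) (i l : ℕ) : Prop :=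
  (∀ m ≤ l, i ≤ G.prio (π m)) ∧ (∃ m ≤ l, G.prio (π m) = i)

/-- The degree of the prefix `π 0 … π l` with respect to priority `i`: the number of
its vertices of priority `i`. -/
def degree (π : ℕ → V) (i l : ℕ) : ℕ :=
  ((Finset.range (l + 1)).filter (fun m => G.prio (π m) = i)).card

/-- The value `θ(π)` of a play: `⊤` if `π` is won by Odd, and otherwise the tuple whose
component at each odd position `i` is the degree of the maximal `i`-dominated stretch
that is a prefix of `π` (and `0` if there is no such prefix). -/
def theta (π : ℕ → V) : G.Meas :=
  if G.WonByEven π then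
    ((toLex (fun j : Fin G.d =>
      if Even (j : ℕ) then 0
      else sSup {c | ∃ l, G.domStretchPrefix π (j : ℕ) l ∧ c = G.degree π (j : ℕ) l}) :
        Lex (Fin G.d → ℕ)) : G.Meas)
  else ⊤

/-- `U` is an `i`-dominion inside the subgame induced on `W`. -/
def IsDominionIn (W : Set V) (i : Bool) (U : Set V) : Prop :=
  ∃ σ : List V → V → V,
    (∀ h u, u ∈ W → G.ownerEven u = i → G.E u (σ h u) ∧ σ h u ∈ W) ∧
    ∀ π, G.IsPlay π → (∀ n, π n ∈ W) → π 0 ∈ U → G.ConsH i σ π →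
      (∀ n, π n ∈ U) ∧ G.WonBy i π

/-- `U` is an `i`-dominion in `G`. -/
def IsDominion (i : Bool) (U : Set V) : Prop := G.IsDominionIn Set.univ i U

/-- Winning region of player `i` in the subgame induced on `W`. -/
def WinIn (W : Set V) (i : Bool) : Set V :=
  {v | v ∈ W ∧ ∃ σ : List V → V → V,
    (∀ h u, u ∈ W → G.ownerEven u = i → G.E u (σ h u) ∧ σ h u ∈ W) ∧
    ∀ π, G.IsPlay π → (∀ n, π n ∈ W) → π 0 = v → G.ConsH i σ π → G.WonBy i π}

end ParityGame

open ParityGame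

section Aux
set_option linter.unusedSectionVars false

variable {V : Type*} [Fintype V] [DecidableEq V] (G : ParityGame V)

lemma meas_exists_isLeast {S : Set G.Meas} (h : S.Nonempty) : ∃ m, IsLeast S m := by
  obtain ⟨a, ha, hmin⟩ := (wellFounded_lt (α := G.Meas)).has_min S h
  exact ⟨a, ha, fun b hb => le_of_not_gt (hmin b hb)⟩

lemma meas_exists_isGreatest {S : Set G.Meas} (hfin : S.Finite) (h : S.Nonempty) :
    ∃ m, IsGreatest S m := by
  obtain ⟨a, ha, hmax⟩ := Set.Finite.exists_maximalFor id S hfin h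
  refine ⟨a, ha, fun b hb => ?_⟩
  rcases le_total b a with h' | h'
  · exact h'
  · exact hmax hb h'

lemma inMEven_top : G.inMEven ⊤ := Or.inl rfl

lemma inMEven_zero : G.inMEven G.zeroMeas :=
  Or.inr ⟨fun _ => 0, rfl, fun _ => ⟨fun _ => rfl, fun _ => Nat.zero_le _⟩⟩

lemma inMEven_max {a b : G.Meas} (ha : G.inMEven a) (hb : G.inMEven b) :
    G.inMEven (max a b) := by
  rcases max_cases a b with ⟨h, _⟩ | ⟨h, _⟩ <;> rw [h] <;> assumption

lemma inMEven_Prog (ρ : V → G.Meas) (v w : V) : G.inMEven (G.Prog ρ v w) := by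
  unfold ParityGame.Prog
  split
  · next h => exact h.choose_spec.1.1
  · exact inMEven_top G

lemma sLeast_mem_or {α : Type*} [Preorder α] (S : Set α) (dflt : α) :
    sLeast S dflt ∈ S ∨ sLeast S dflt = dflt := by
  unfold sLeast
  split
  · next h => exact Or.inl h.choose_spec.1
  · exact Or.inr rfl

lemma sGreatest_mem_or {α : Type*} [Preorder α] (S : Set α) (dflt : α) :
    sGreatest S dflt ∈ S ∨ sGreatest S dflt = dflt := by
  unfold sGreatest
  split
  · next h => exact Or.inl h.choose_spec.1
  · exact Or.inr rfl

lemma isMeasure_Lift {ρ : V → G.Meas} (hρ : G.IsMeasure ρ) (u : V) :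
    G.IsMeasure (G.Lift ρ u) := by
  intro x
  unfold ParityGame.Lift
  rcases eq_or_ne x u with rfl | hx
  · rw [Function.update_self]
    have hS : ∀ s ∈ {m | ∃ w, G.E x w ∧ m = G.Prog ρ x w}, G.inMEven s := by
      rintro s ⟨w, _, rfl⟩; exact inMEven_Prog G ρ x w
    split
    · refine inMEven_max G (hρ x) ?_
      rcases sLeast_mem_or {m | ∃ w, G.E x w ∧ m = G.Prog ρ x w} (⊤ : G.Meas) with h | h
      · exact hS _ h
      · rw [h]; exact inMEven_top G
    · refine inMEven_max G (hρ x) ?_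
      rcases sGreatest_mem_or {m | ∃ w, G.E x w ∧ m = G.Prog ρ x w} (⊤ : G.Meas) with h | h
      · exact hS _ h
      · rw [h]; exact inMEven_top G
  · rw [Function.update_of_ne hx]; exact hρ x

end Aux


/-- the first vertex lifted to `⊤` has odd priority. -/
theorem first_top_vertex_has_odd_priority
    {V : Type*} [Fintype V] [DecidableEq V] (G : ParityGame V)
    (ρs : ℕ → V → G.Meas) (N : ℕ) (v : V)
    (hft : G.FirstTop ρs N v) :
    Odd (G.prio v) := by
  obtain ⟨h0, hstep, hnt, hN⟩ := hft
  rcases Nat.eq_zero_or_pos N with rfl | hpos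
  · rw [h0 v] at hN; exact absurd hN WithTop.coe_ne_top
  obtain ⟨M, rfl⟩ : ∃ M, N = M + 1 := ⟨N - 1, (Nat.succ_pred_eq_of_pos hpos).symm⟩
  obtain ⟨u, hlift, -, -⟩ := hstep M (Nat.lt_succ_self M)
  set ρ := ρs M with hρ
  have hmeas : G.IsMeasure ρ := by
    rw [hρ]
    have key : ∀ j, j ≤ M → G.IsMeasure (ρs j) := by
      intro j
      induction j with
      | zero => intro _ x; rw [h0 x]; exact inMEven_zero G
      | succ k ih =>
        intro hk
        obtain ⟨u', hl, -, -⟩ := hstep k (Nat.lt_of_lt_of_le hk (Nat.le_succ M))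
        rw [hl]
        exact isMeasure_Lift G (ih (Nat.le_of_succ_le hk)) u'
    exact key M le_rfl
  have hvnt : ∀ w, ρ w ≠ ⊤ := hnt M (Nat.lt_succ_self M)
  rw [hlift] at hN
  have hvu : v = u := by
    by_contra h
    rw [ParityGame.Lift, Function.update_of_ne h] at hN
    exact hvnt v hN
  subst hvu
  rw [ParityGame.Lift, Function.update_self] at hN
  set S : Set G.Meas := {m | ∃ w, G.E v w ∧ m = G.Prog ρ v w} with hSdef
  have hSne : S.Nonempty := by
    obtain ⟨w, hw⟩ := G.total v; exact ⟨_, w, hw, rfl⟩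
  have hSfin : S.Finite := by
    refine (Set.finite_range (G.Prog ρ v)).subset ?_
    rintro m ⟨w, -, rfl⟩; exact ⟨w, rfl⟩
  have hex : ∃ w, G.E v w ∧ G.Prog ρ v w = ⊤ := by
    split_ifs at hN with hown
    · have hle := meas_exists_isLeast G hSne
      have hmem : sLeast S (⊤ : G.Meas) ∈ S := by
        unfold sLeast; rw [dif_pos hle]; exact hle.choose_spec.1
      rcases max_eq_iff.mp hN with ⟨h1, -⟩ | ⟨h1, -⟩
      · exact absurd h1 (hvnt v)
      · rw [h1] at hmem
        obtain ⟨w, hw, hwp⟩ := hmem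
        exact ⟨w, hw, hwp.symm⟩
    · have hge := meas_exists_isGreatest G hSfin hSne
      have hmem : sGreatest S (⊤ : G.Meas) ∈ S := by
        unfold sGreatest; rw [dif_pos hge]; exact hge.choose_spec.1
      rcases max_eq_iff.mp hN with ⟨h1, -⟩ | ⟨h1, -⟩
      · exact absurd h1 (hvnt v)
      · rw [h1] at hmem
        obtain ⟨w, hw, hwp⟩ := hmem
        exact ⟨w, hw, hwp.symm⟩
  obtain ⟨w, hvw, hPw⟩ := hex
  rw [← Nat.not_even_iff_odd]
  intro heven
  obtain ⟨f, hf, hfprop⟩ := (hmeas w).resolve_left (hvnt w)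
  set k := G.prio v with hk
  set g : Fin G.d → ℕ := fun j => if (j : ℕ) ≤ k then f j else 0 with hg
  set m₀ : G.Meas := ((toLex g : Lex (Fin G.d → ℕ)) : G.Meas) with hm₀
  have hm₀mem : m₀ ∈ {m | G.inMEven m ∧ G.progCond ρ v w m} := by
    constructor
    · refine Or.inr ⟨g, rfl, fun i => ⟨fun hi => ?_, fun hi => ?_⟩⟩
      · simp only [hg]; split
        · exact (hfprop i).1 hi
        · rfl
      · simp only [hg]; split
        · exact (hfprop i).2 hi
        · exact Nat.zero_le _
    · unfold ParityGame.progCond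
      rw [if_pos heven]
      unfold ParityGame.geAt
      have heq : G.trunc (G.prio v) m₀ = G.trunc (G.prio v) (ρ w) := by
        rw [hf, hm₀]
        unfold ParityGame.trunc
        simp only [WithTop.map_coe]
        refine congrArg _ (congrArg toLex ?_)
        funext j
        by_cases hj : (j : ℕ) ≤ k <;> simp [hg, hj, ← hk]
      rw [heq]
  have hT : ∃ m, IsLeast {m | G.inMEven m ∧ G.progCond ρ v w m} m :=
    meas_exists_isLeast G ⟨m₀, hm₀mem⟩
  have hle : G.Prog ρ v w ≤ m₀ := by
    unfold ParityGame.Prog; rw [dif_pos hT]; exact hT.choose_spec.2 hm₀mem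
  rw [hPw] at hle
  exact WithTop.coe_ne_top (top_le_iff.mp hle)


end
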